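/- Let A and B be finite alphabets with zero symbols, let Y ⊆ B^{ℤ³} be a subshift of finite type containing the all-zero configuration, and let φ : Y → A^{ℤ³} be a continuous shift-equivariant map with image X = φ(Y), such that φ maps the all-zero configuration to the all-zero configuration and the all-zero configuration of B^{ℤ³} is the only φ-preimage of the all-zero configuration of A^{ℤ³} (i.e. φ is a 0-to-0 SFT cover of the sofic shift X). Then there exists r ∈ ℕ such that X is r-zero-gluing with respect to the ℓ∞ metric on ℤ³. -/

import Mathlib

/-- The group `ℤ³`. -/
abbrev V3 : Type := ℤ × ℤ × ℤ

/-- The product topology on configurations `ι → A`, where the alphabet `A`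
carries the discrete topology. -/
def prodTop (ι A : Type) : TopologicalSpace (ι → A) :=
  @Pi.topologicalSpace ι (fun _ => A) (fun _ => ⊥)

/-- The shift action: `(σ_v x)_u = x_{u - v}`. -/
def shift {ι A : Type} [Sub ι] (v : ι) (x : ι → A) : ι → A := fun u => x (u - v)

/-- A subshift: a closed, shift-invariant set of configurations. -/
def IsSubshift {ι A : Type} [Sub ι] (X : Set (ι → A)) : Prop :=
  @IsClosed _ (prodTop ι A) X ∧ ∀ (v : ι), ∀ x ∈ X, shift v x ∈ X

/-- A subshift of finite type: defined by a finite set `F` of forbidden patterns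
on a finite domain `D`. -/
def IsSFT {ι A : Type} [Add ι] (X : Set (ι → A)) : Prop :=
  ∃ (D : Finset ι) (F : Set (↥D → A)),
    X = {x : ι → A | ∀ v : ι, (fun u : ↥D => x (v + (u : ι))) ∉ F}

/-- The subspace topology on a set of configurations. -/
def subTop {ι A : Type} (X : Set (ι → A)) : TopologicalSpace ↥X :=
  TopologicalSpace.induced Subtype.val (prodTop ι A)

/-- The ℤ-trace (projective ℤ-subdynamics) of a three-dimensional subshift. -/
def trace {A : Type} (X : Set (V3 → A)) : Set (ℤ → A) :=
  {y : ℤ → A | ∃ x ∈ X, ∀ n : ℤ, y n = x (0, 0, n)}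

/-- `spa z Y`: the least `k` such that `Y` is `k`-sparse (`⊤` if there is none). -/
noncomputable def spa {A : Type} (z : A) (Y : Set (ℤ → A)) : ℕ∞ :=
  sInf {k : ℕ∞ | ∀ y ∈ Y, {n : ℤ | y n ≠ z}.encard ≤ k}

/-- `ES z Y`: essential sparseness, the least `k` such that for some radius `r`,
the support of every `y ∈ Y` is covered by `k` intervals of radius `r`
(`⊤` if there is none). -/
noncomputable def ES {A : Type} (z : A) (Y : Set (ℤ → A)) : ℕ∞ :=
  sInf {k : ℕ∞ | ∃ r : ℕ, ∀ y ∈ Y, ∃ N : Set ℤ,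
    N.encard ≤ k ∧ ∀ n : ℤ, y n ≠ z → ∃ m ∈ N, |n - m| ≤ (r : ℤ)}

/-- Vertical determinism: two configurations agreeing on the lower half-space
`{(i,j,k) : k < 0}` are equal. -/
def VertDet {A : Type} (X : Set (V3 → A)) : Prop :=
  ∀ x ∈ X, ∀ y ∈ X, (∀ v : V3, v.2.2 < 0 → x v = y v) → x = y

/-- A 0-to-0 conjugacy between pointed three-dimensional subshifts:
a shift-equivariant homeomorphism sending the all-zero configuration to
the all-zero configuration (both subshifts contain their all-zero configurations). -/
def ZeroConj {A B : Type} (zA : A) (zB : B)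
    (X : Set (V3 → A)) (X' : Set (V3 → B)) : Prop :=
  ((fun _ => zA) ∈ X) ∧ ((fun _ => zB) ∈ X') ∧
  ∃ φ : @Homeomorph ↥X ↥X' (subTop X) (subTop X'),
    (∀ (v : V3) (x : ↥X) (h : shift v x.1 ∈ X),
      (φ ⟨shift v x.1, h⟩).1 = shift v (φ x).1) ∧
    (∀ x : ↥X, x.1 = (fun _ => zA) → (φ x).1 = (fun _ => zB))

/-- `α(X) = spa(T(X))`. -/
noncomputable def alphaInv {A : Type} (z : A) (X : Set (V3 → A)) : ℕ∞ :=
  spa z (trace X)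

/-- `β(X) = ES(T(X))`. -/
noncomputable def betaInv {A : Type} (z : A) (X : Set (V3 → A)) : ℕ∞ :=
  ES z (trace X)

/-- `underline-α(X)`: the infimum of `α(X')` over all subshifts `X'`
0-to-0 conjugate to `X`. -/
noncomputable def ulAlpha {A : Type} (zA : A) (X : Set (V3 → A)) : ℕ∞ :=
  sInf {k : ℕ∞ | ∃ (B : Type) (_ : Fintype B) (zB : B) (X' : Set (V3 → B)),
    IsSubshift X' ∧ ZeroConj zA zB X X' ∧ alphaInv zB X' = k}

/-- `underline-β(X)`: the infimum of `β(X')` over all subshifts `X'`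
0-to-0 conjugate to `X`. -/
noncomputable def ulBeta {A : Type} (zA : A) (X : Set (V3 → A)) : ℕ∞ :=
  sInf {k : ℕ∞ | ∃ (B : Type) (_ : Fintype B) (zB : B) (X' : Set (V3 → B)),
    IsSubshift X' ∧ ZeroConj zA zB X X' ∧ betaInv zB X' = k}

/-- `overline-β(X)`: the supremum of `β(X')` over all subshifts `X'`
0-to-0 conjugate to `X`. -/
noncomputable def olBeta {A : Type} (zA : A) (X : Set (V3 → A)) : ℕ∞ :=
  sSup {k : ℕ∞ | ∃ (B : Type) (_ : Fintype B) (zB : B) (X' : Set (V3 → B)),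
    IsSubshift X' ∧ ZeroConj zA zB X X' ∧ betaInv zB X' = k}

/-- Directions of the faces of a Wang cube: `(i, true)` is `+eᵢ`, `(i, false)` is `-eᵢ`. -/
abbrev Dir : Type := Fin 3 × Bool

/-- The standard basis vectors of `ℤ³`. -/
def unitV : Fin 3 → V3 := ![(1, 0, 0), (0, 1, 0), (0, 0, 1)]

/-- The vector of a direction. -/
def dirVec (s : Dir) : V3 := if s.2 then unitV s.1 else -unitV s.1

/-- The opposite direction. -/
def opp (s : Dir) : Dir := (s.1, !s.2)

/-- The zero cube: all six faces have the zero color. -/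
def zeroCube {C : Type} (z : C) : Dir → C := fun _ => z

/-- The set of valid tilings by a finite set `W` of Wang cubes: colors of
matching faces of adjacent cubes agree. -/
def WangTilings {C : Type} (W : Finset (Dir → C)) :
    Set (V3 → {w : Dir → C // w ∈ W}) :=
  {x | ∀ (v : V3) (s : Dir), (x v).1 s = (x (v + dirVec s)).1 (opp s)}

/-- ℓ∞ distance on `ℤ³`. -/
def dinf (u w : V3) : ℤ :=
  max |u.1 - w.1| (max |u.2.1 - w.2.1| |u.2.2 - w.2.2|)

/-- Reachability in the graph on the support of `x` with edges between
cells at ℓ∞-distance at most `r`. -/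
def Reach {A : Type} (z : A) (r : ℕ) (x : V3 → A) : V3 → V3 → Prop :=
  Relation.ReflTransGen (fun u w => x u ≠ z ∧ x w ≠ z ∧ dinf u w ≤ (r : ℤ))

/-- `y` is an `r`-connected component configuration of `x`: it agrees with `x`
on one `r`-connected component of the support of `x` and is zero elsewhere. -/
def IsCompConf {A : Type} (z : A) (r : ℕ) (x y : V3 → A) : Prop :=
  ∃ v₀ : V3, x v₀ ≠ z ∧
    (∀ u : V3, (x u ≠ z ∧ Reach z r x v₀ u) → y u = x u) ∧
    (∀ u : V3, ¬(x u ≠ z ∧ Reach z r x v₀ u) → y u = z)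

/-- A set of configurations is `r`-zero-gluing if membership is equivalent to
membership of all `r`-connected component configurations. -/
def IsZeroGluing {A : Type} (z : A) (r : ℕ) (X : Set (V3 → A)) : Prop :=
  ∀ x : V3 → A, x ∈ X ↔ ∀ y : V3 → A, IsCompConf z r x y → y ∈ X

/-- The `r`-zero-gluing closure of `X`: the intersection of all `r`-zero-gluing
subshifts containing `X`. -/
def ZGC {A : Type} (z : A) (r : ℕ) (X : Set (V3 → A)) : Set (V3 → A) :=
  ⋂₀ {Y : Set (V3 → A) | IsSubshift Y ∧ IsZeroGluing z r Y ∧ X ⊆ Y}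

section Aux

/-! ### Basic facts about `dinf` -/

lemma dinf_nonneg (u w : V3) : 0 ≤ dinf u w :=
  le_trans (abs_nonneg _) (le_max_left _ _)

lemma dinf_comm (u w : V3) : dinf u w = dinf w u := by
  simp [dinf, abs_sub_comm]

lemma dinf_self (u : V3) : dinf u u = 0 := by simp [dinf]

lemma dinf_triangle (a b c : V3) : dinf a c ≤ dinf a b + dinf b c := by
  have h1 : |a.1 - b.1| ≤ dinf a b := le_max_left _ _
  have h2 : |a.2.1 - b.2.1| ≤ dinf a b := le_trans (le_max_left _ _) (le_max_right _ _)
  have h3 : |a.2.2 - b.2.2| ≤ dinf a b := le_trans (le_max_right _ _) (le_max_right _ _)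
  have k1 : |b.1 - c.1| ≤ dinf b c := le_max_left _ _
  have k2 : |b.2.1 - c.2.1| ≤ dinf b c := le_trans (le_max_left _ _) (le_max_right _ _)
  have k3 : |b.2.2 - c.2.2| ≤ dinf b c := le_trans (le_max_right _ _) (le_max_right _ _)
  have t1 : |a.1 - c.1| ≤ |a.1 - b.1| + |b.1 - c.1| := abs_sub_le _ _ _
  have t2 : |a.2.1 - c.2.1| ≤ |a.2.1 - b.2.1| + |b.2.1 - c.2.1| := abs_sub_le _ _ _
  have t3 : |a.2.2 - c.2.2| ≤ |a.2.2 - b.2.2| + |b.2.2 - c.2.2| := abs_sub_le _ _ _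
  refine max_le (by linarith) (max_le (by linarith) (by linarith))

lemma dinf_add_right (u w p : V3) : dinf (u + p) (w + p) = dinf u w := by
  simp [dinf, Prod.fst_add, Prod.snd_add, add_sub_add_right_eq_sub]

lemma dinf_shift (p u : V3) : dinf (p + u) p = dinf u 0 := by
  have := dinf_add_right u 0 p
  simpa [add_comm] using this

/-! ### Reach lemmas -/

lemma reach_symm {A : Type} (z : A) (r : ℕ) (x : V3 → A) {u w : V3}
    (h : Reach z r x u w) : Reach z r x w u := by
  refine @Std.Symm.symm _ _ (@Relation.ReflTransGen.stdSymm _ _ ⟨?_⟩) _ _ h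
  rintro a b ⟨h1, h2, h3⟩
  exact ⟨h2, h1, by rwa [dinf_comm]⟩

lemma reach_ne {A : Type} (z : A) (r : ℕ) (x : V3 → A) {u w : V3}
    (h : Reach z r x u w) (hu : x u ≠ z) : x w ≠ z := by
  rcases h.cases_tail with h | ⟨b, _, hb⟩
  · exact h ▸ hu
  · exact hb.2.1

end Aux
section Top

lemma sft_shift {B : Type} (Y : Set (V3 → B)) (hY : IsSFT Y) :
    ∀ v : V3, ∀ y ∈ Y, shift v y ∈ Y := by
  obtain ⟨D, F, rfl⟩ := hY
  intro v y hy w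
  have h := hy (w - v)
  have : (fun u : ↥D => shift v y (w + (u : V3))) = fun u : ↥D => y (w - v + (u : V3)) := by
    funext u
    simp only [shift]
    congr 1
    ring
  rw [this]
  exact h

lemma sft_isClosed {B : Type} (Y : Set (V3 → B)) (hY : IsSFT Y) :
    @IsClosed _ (prodTop V3 B) Y := by
  letI : TopologicalSpace B := ⊥
  haveI : DiscreteTopology B := ⟨rfl⟩
  have htop : prodTop V3 B = (inferInstance : TopologicalSpace (V3 → B)) := rfl
  rw [htop]
  obtain ⟨D, F, rfl⟩ := hY
  have heq : {x : V3 → B | ∀ v : V3, (fun u : ↥D => x (v + (u : V3))) ∉ F}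
      = ⋂ v : V3, (fun x : V3 → B => fun u : ↥D => x (v + (u : V3))) ⁻¹' Fᶜ := by
    ext x; simp [Set.mem_iInter]
  rw [heq]
  refine isClosed_iInter fun v => ?_
  have hcont : Continuous (fun x : V3 → B => fun u : ↥D => x (v + (u : V3))) :=
    continuous_pi fun u => continuous_apply _
  exact (isClosed_discrete _).preimage hcont

end Top
section Cover

variable {A B : Type}

/-- Radius bound of a finite set of sites. -/
def radOf (I : Finset V3) : ℕ := I.sup fun v => (dinf v 0).toNat

lemma radOf_le {I : Finset V3} {i : V3} (hi : i ∈ I) : dinf i 0 ≤ (radOf I : ℤ) := by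
  have h1 : (dinf i 0).toNat ≤ radOf I := Finset.le_sup (f := fun v => (dinf v 0).toNat) hi
  have h2 : dinf i 0 ≤ ((dinf i 0).toNat : ℤ) := Int.self_le_toNat _
  exact h2.trans (by exact_mod_cast h1)

lemma exists_radius [Finite B] (Y : Set (V3 → B))
    (hcl : @IsClosed _ (prodTop V3 B) Y)
    (hsh : ∀ v : V3, ∀ y ∈ Y, shift v y ∈ Y)
    (φ : (V3 → B) → (V3 → A))
    (hcont : @ContinuousOn _ _ (prodTop V3 B) (prodTop V3 A) φ Y)
    (hequiv : ∀ v : V3, ∀ y ∈ Y, φ (shift v y) = shift v (φ y)) :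
    ∃ R : ℕ, ∀ (p : V3), ∀ y ∈ Y, ∀ y' ∈ Y,
      (∀ v : V3, dinf v p ≤ (R : ℤ) → y v = y' v) → φ y p = φ y' p := by
  classical
  letI : TopologicalSpace B := ⊥
  haveI : DiscreteTopology B := ⟨rfl⟩
  letI : TopologicalSpace A := ⊥
  haveI : DiscreteTopology A := ⟨rfl⟩
  have hcont' : ContinuousOn φ Y := hcont
  have hcl' : IsClosed Y := hcl
  have key : ∀ y ∈ Y, ∃ I : Finset V3, ∀ y' ∈ Y,
      (∀ i ∈ I, y' i = y i) → φ y' 0 = φ y 0 := by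
    intro y hy
    have h1 : ContinuousWithinAt (fun x => φ x 0) Y y :=
      ((continuous_apply (0 : V3)).comp_continuousOn hcont') y hy
    have h2 : (fun x => φ x 0) ⁻¹' {φ y 0} ∈ nhdsWithin y Y :=
      h1 ((isOpen_discrete _).mem_nhds (Set.mem_singleton _))
    rw [mem_nhdsWithin] at h2
    obtain ⟨U, hUo, hyU, hUsub⟩ := h2
    obtain ⟨I, u, hu, hsub⟩ := isOpen_pi_iff.mp hUo y hyU
    refine ⟨I, fun y' hy' hagree => ?_⟩
    have : y' ∈ U := hsub fun i hi => (hagree i hi) ▸ (hu i hi).2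
    exact hUsub ⟨this, hy'⟩
  choose! I hI using key
  have hYcomp : IsCompact Y := hcl'.isCompact
  obtain ⟨t, htY, hcover⟩ := hYcomp.elim_nhds_subcover
      (fun y => Set.pi (I y : Set V3) fun i => {y i})
      (fun y hy => IsOpen.mem_nhds
        (isOpen_set_pi (I y).finite_toSet fun i _ => isOpen_discrete _)
        (fun i _ => rfl))
  set R : ℕ := t.sup fun z => radOf (I z) with hR
  have at0 : ∀ y ∈ Y, ∀ y' ∈ Y, (∀ v : V3, dinf v 0 ≤ (R : ℤ) → y v = y' v) →
      φ y 0 = φ y' 0 := by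
    intro y hy y' hy' hagree
    obtain ⟨z, hzt, hyz⟩ := Set.mem_iUnion₂.mp (hcover hy)
    have hzY : z ∈ Y := htY z hzt
    have hyz' : ∀ i ∈ I z, y i = z i := fun i hi => hyz i hi
    have hdi : ∀ i ∈ I z, dinf i 0 ≤ (R : ℤ) := by
      intro i hi
      refine (radOf_le hi).trans ?_
      exact_mod_cast Finset.le_sup (f := fun z => radOf (I z)) hzt
    have hy'z : ∀ i ∈ I z, y' i = z i := fun i hi =>
      (hagree i (hdi i hi)).symm.trans (hyz' i hi)
    rw [hI z hzY y hy hyz', hI z hzY y' hy' hy'z]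
  refine ⟨R, fun p y hy y' hy' hagree => ?_⟩
  have h1 : φ y p = φ (shift (-p) y) 0 := by
    rw [hequiv (-p) y hy]
    simp [shift]
  have h2 : φ y' p = φ (shift (-p) y') 0 := by
    rw [hequiv (-p) y' hy']
    simp [shift]
  rw [h1, h2]
  refine at0 _ (hsh _ _ hy) _ (hsh _ _ hy') fun v hv => ?_
  show y (v - -p) = y' (v - -p)
  refine hagree _ ?_
  have : v - -p = p + v := by ring
  rw [this, dinf_shift]
  exact hv

lemma exists_detect [Finite B] (zA : A) (zB : B) (Y : Set (V3 → B))
    (hcl : @IsClosed _ (prodTop V3 B) Y)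
    (hsh : ∀ v : V3, ∀ y ∈ Y, shift v y ∈ Y)
    (φ : (V3 → B) → (V3 → A))
    (hcont : @ContinuousOn _ _ (prodTop V3 B) (prodTop V3 A) φ Y)
    (hequiv : ∀ v : V3, ∀ y ∈ Y, φ (shift v y) = shift v (φ y))
    (hinj : ∀ y ∈ Y, φ y = (fun _ => zA) → y = (fun _ => zB)) :
    ∃ n : ℕ, ∀ (p : V3), ∀ y ∈ Y, y p ≠ zB →
      ∃ v : V3, dinf v p ≤ (n : ℤ) ∧ φ y v ≠ zA := by
  classical
  letI : TopologicalSpace B := ⊥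
  haveI : DiscreteTopology B := ⟨rfl⟩
  letI : TopologicalSpace A := ⊥
  haveI : DiscreteTopology A := ⟨rfl⟩
  have hcont' : ContinuousOn φ Y := hcont
  have hcl' : IsClosed Y := hcl
  set K : Set (V3 → B) := Y ∩ {y | y 0 ≠ zB} with hK
  have hKcomp : IsCompact K := by
    refine hcl'.isCompact.inter_right ?_
    have heq : {y : V3 → B | y 0 ≠ zB} = (fun y : V3 → B => y 0) ⁻¹' ({zB}ᶜ) := rfl
    rw [heq]
    exact (isClosed_discrete _).preimage (continuous_apply (0 : V3))
  have key : ∀ y ∈ K, ∃ (v : V3) (I : Finset V3), ∀ y' ∈ Y,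
      (∀ i ∈ I, y' i = y i) → φ y' v ≠ zA := by
    rintro y ⟨hyY, hy0⟩
    have hne : ∃ v : V3, φ y v ≠ zA := by
      by_contra h
      push_neg at h
      have : φ y = fun _ => zA := funext h
      have := hinj y hyY this
      exact hy0 (congrFun this 0)
    obtain ⟨v, hv⟩ := hne
    have h1 : ContinuousWithinAt (fun x => φ x v) Y y :=
      ((continuous_apply v).comp_continuousOn hcont') y hyY
    have h2 : (fun x => φ x v) ⁻¹' {φ y v} ∈ nhdsWithin y Y :=
      h1 ((isOpen_discrete _).mem_nhds (Set.mem_singleton _))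
    rw [mem_nhdsWithin] at h2
    obtain ⟨U, hUo, hyU, hUsub⟩ := h2
    obtain ⟨I, u, hu, hsub⟩ := isOpen_pi_iff.mp hUo y hyU
    refine ⟨v, I, fun y' hy' hagree => ?_⟩
    have : y' ∈ U := hsub fun i hi => (hagree i hi) ▸ (hu i hi).2
    have : φ y' v = φ y v := hUsub ⟨this, hy'⟩
    rw [this]; exact hv
  choose! v I hvI using key
  obtain ⟨t, htK, hcover⟩ := hKcomp.elim_nhds_subcover
      (fun y => Set.pi (I y : Set V3) fun i => {y i})
      (fun y hy => IsOpen.mem_nhds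
        (isOpen_set_pi (I y).finite_toSet fun i _ => isOpen_discrete _)
        (fun i _ => rfl))
  set n : ℕ := t.sup fun z => (dinf (v z) 0).toNat with hn
  have at0 : ∀ y ∈ Y, y 0 ≠ zB → ∃ w : V3, dinf w 0 ≤ (n : ℤ) ∧ φ y w ≠ zA := by
    intro y hyY hy0
    have hyK : y ∈ K := ⟨hyY, hy0⟩
    obtain ⟨z, hzt, hyz⟩ := Set.mem_iUnion₂.mp (hcover hyK)
    have hzK : z ∈ K := htK z hzt
    refine ⟨v z, ?_, hvI z hzK y hyY fun i hi => hyz i hi⟩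
    have h2 : dinf (v z) 0 ≤ ((dinf (v z) 0).toNat : ℤ) := Int.self_le_toNat _
    refine h2.trans ?_
    exact_mod_cast Finset.le_sup (f := fun z => (dinf (v z) 0).toNat) hzt
  refine ⟨n, fun p y hyY hyp => ?_⟩
  have hyY' : shift (-p) y ∈ Y := hsh _ _ hyY
  have h0 : shift (-p) y 0 ≠ zB := by
    show y (0 - -p) ≠ zB
    simpa using hyp
  obtain ⟨w, hw, hwne⟩ := at0 _ hyY' h0
  refine ⟨w + p, ?_, ?_⟩
  · rw [show w + p = p + w by ring, dinf_shift]; exact hw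
  · rw [hequiv (-p) y hyY] at hwne
    show φ y (w + p) ≠ zA
    have : shift (-p) (φ y) w = φ y (w + p) := by
      simp [shift, sub_neg_eq_add]
    rwa [this] at hwne

end Cover
/-- If `X = φ(Y)` is a three-dimensional sofic shift with a 0-to-0 SFT cover
`φ : Y → X`, then `X` is `r`-zero-gluing for some `r ∈ ℕ` (with respect to the
ℓ∞ metric on `ℤ³`). -/
theorem statement17 {A B : Type} [Fintype A] [Fintype B] (zA : A) (zB : B)
    (Y : Set (V3 → B)) (hY : IsSFT Y) (hzY : (fun _ => zB) ∈ Y)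
    (φ : (V3 → B) → (V3 → A))
    (hcont : @ContinuousOn _ _ (prodTop V3 B) (prodTop V3 A) φ Y)
    (hequiv : ∀ v : V3, ∀ y ∈ Y, φ (shift v y) = shift v (φ y))
    (hzero : φ (fun _ => zB) = (fun _ => zA))
    (hinj : ∀ y ∈ Y, φ y = (fun _ => zA) → y = (fun _ => zB)) :
    ∃ r : ℕ, IsZeroGluing zA r (φ '' Y) := by
  classical
  have hclosed := sft_isClosed Y hY
  have hshift := sft_shift Y hY
  obtain ⟨R, hR⟩ := exists_radius Y hclosed hshift φ hcont hequiv
  obtain ⟨n, hn⟩ := exists_detect zA zB Y hclosed hshift φ hcont hequiv hinj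
  obtain ⟨D, F, hYeq⟩ := hY
  set m : ℕ := radOf D with hmdef
  have hmem : ∀ y : V3 → B, y ∈ Y ↔ ∀ v : V3, (fun u : ↥D => y (v + (u : V3))) ∉ F := by
    intro y; rw [hYeq]; exact Iff.rfl
  -- membership via local window agreement with known members
  have hmem' : ∀ y' : V3 → B,
      (∀ v : V3, ∃ yv, yv ∈ Y ∧ ∀ u : V3, dinf u v ≤ (m : ℤ) → y' u = yv u) → y' ∈ Y := by
    intro y' h
    rw [hmem]
    intro v
    obtain ⟨yv, hyv, hagree⟩ := h v
    have heq : (fun u : ↥D => y' (v + (u : V3))) = fun u : ↥D => yv (v + (u : V3)) := by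
      funext u
      refine hagree _ ?_
      rw [dinf_shift]
      exact radOf_le u.2
    rw [heq]
    exact (hmem yv).mp hyv v
  set r : ℕ := 2 * m + 2 * n + 2 * R with hrdef
  have hrZ : (r : ℤ) = 2 * (m : ℤ) + 2 * (n : ℤ) + 2 * (R : ℤ) := by
    rw [hrdef]; push_cast; ring
  have hm0 : (0 : ℤ) ≤ (m : ℤ) := Int.natCast_nonneg _
  have hn0 : (0 : ℤ) ≤ (n : ℤ) := Int.natCast_nonneg _
  have hR0 : (0 : ℤ) ≤ (R : ℤ) := Int.natCast_nonneg _
  refine ⟨r, fun x => ?_⟩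
  constructor
  · -- splitting off a component stays in the image
    rintro ⟨y, hyY, hyx⟩ c hc
    obtain ⟨v₀, hv₀, hc1, hc2⟩ := hc
    set C : V3 → Prop := fun w => x w ≠ zA ∧ Reach zA r x v₀ w with hCdef
    set NearC : V3 → Prop := fun u => ∃ w, C w ∧ dinf u w ≤ (n : ℤ) with hNCdef
    set y' : V3 → B := fun u => if NearC u then y u else zB with hy'def
    have hsupp : ∀ u : V3, y u ≠ zB → ∃ w, x w ≠ zA ∧ dinf u w ≤ (n : ℤ) := by
      intro u hu
      obtain ⟨v, hvd, hvne⟩ := hn u y hyY hu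
      rw [hyx] at hvne
      exact ⟨v, hvne, by rwa [dinf_comm]⟩
    have hext : ∀ w w' : V3, C w → x w' ≠ zA → dinf w w' ≤ (r : ℤ) → C w' :=
      fun w w' hw hw' hd => ⟨hw', hw.2.tail ⟨hw.1, hw', hd⟩⟩
    have hy'Y : y' ∈ Y := by
      refine hmem' y' fun v => ?_
      by_cases hcase : ∃ u : V3, dinf u v ≤ (m : ℤ) ∧ NearC u
      · obtain ⟨u₀, hu₀d, w₁, hw₁C, hw₁d⟩ := hcase
        refine ⟨y, hyY, fun u hud => ?_⟩
        by_cases hNu : NearC u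
        · simp only [hy'def]; rw [if_pos hNu]
        · simp only [hy'def]; rw [if_neg hNu]
          by_contra hne
          have hyune : y u ≠ zB := fun h => hne h.symm
          obtain ⟨w₂, hw₂ne, hw₂d⟩ := hsupp u hyune
          have hd : dinf w₁ w₂ ≤ (r : ℤ) := by
            have t1 := dinf_triangle w₁ u₀ w₂
            have t2 := dinf_triangle u₀ u w₂
            have t3 := dinf_triangle u₀ v u
            have c1 : dinf w₁ u₀ = dinf u₀ w₁ := dinf_comm _ _
            have c3 : dinf v u = dinf u v := dinf_comm _ _
            linarith [hw₁d, hu₀d, hud, hw₂d]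
          have : C w₂ := hext w₁ w₂ hw₁C hw₂ne hd
          exact hNu ⟨w₂, this, hw₂d⟩
      · refine ⟨fun _ => zB, hzY, fun u hud => ?_⟩
        simp only [hy'def]
        rw [if_neg fun hN => hcase ⟨u, hud, hN⟩]
    refine ⟨y', hy'Y, ?_⟩
    funext p
    by_cases hp : ∃ w, C w ∧ dinf p w ≤ (n : ℤ) + (R : ℤ)
    · obtain ⟨w, hwC, hpw⟩ := hp
      have hag : ∀ v : V3, dinf v p ≤ (R : ℤ) → y' v = y v := by
        intro v hv
        by_cases hNv : NearC v
        · simp only [hy'def]; rw [if_pos hNv]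
        · simp only [hy'def]; rw [if_neg hNv]
          by_contra hne
          have hyvne : y v ≠ zB := fun h => hne h.symm
          obtain ⟨w₂, hw₂ne, hw₂d⟩ := hsupp v hyvne
          have hd : dinf w w₂ ≤ (r : ℤ) := by
            have t1 := dinf_triangle w p w₂
            have t2 := dinf_triangle p v w₂
            have c1 : dinf w p = dinf p w := dinf_comm _ _
            have c2 : dinf p v = dinf v p := dinf_comm _ _
            linarith [hpw, hv, hw₂d]
          have : C w₂ := hext w w₂ hwC hw₂ne hd
          exact hNv ⟨w₂, this, hw₂d⟩
      have h1 : φ y' p = φ y p := hR p y' hy'Y y hyY hag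
      rw [h1, hyx]
      by_cases hxp : C p
      · exact (hc1 p hxp).symm
      · have hxpz : x p = zA := by
          by_contra hne
          refine hxp (hext w p hwC hne ?_)
          rw [dinf_comm]
          linarith [hpw]
        rw [hc2 p hxp, hxpz]
    · have hag : ∀ v : V3, dinf v p ≤ (R : ℤ) → y' v = (fun _ => zB) v := by
        intro v hv
        simp only [hy'def]
        rw [if_neg]
        rintro ⟨w, hwC, hvw⟩
        refine hp ⟨w, hwC, ?_⟩
        have t1 := dinf_triangle p v w
        have c1 : dinf p v = dinf v p := dinf_comm _ _
        linarith
      have h1 : φ y' p = φ (fun _ => zB) p := hR p y' hy'Y _ hzY hag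
      rw [h1, hzero]
      have hnC : ¬ C p := fun hCp => hp ⟨p, hCp, by rw [dinf_self]; positivity⟩
      exact (hc2 p hnC).symm
  · -- gluing components back together
    intro hall
    have hchoice : ∀ c : V3 → A, ∃ yc : V3 → B, c ∈ φ '' Y → yc ∈ Y ∧ φ yc = c := by
      intro c
      by_cases hc : c ∈ φ '' Y
      · obtain ⟨yc, h1, h2⟩ := hc
        exact ⟨yc, fun _ => ⟨h1, h2⟩⟩
      · exact ⟨fun _ => zB, fun h => absurd h hc⟩
    choose g hg using hchoice
    have hg1 : ∀ c : V3 → A, c ∈ φ '' Y → g c ∈ Y := fun c hc => (hg c hc).1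
    have hg2 : ∀ c : V3 → A, c ∈ φ '' Y → φ (g c) = c := fun c hc => (hg c hc).2
    set cc : V3 → V3 → A := fun v u => if x u ≠ zA ∧ Reach zA r x v u then x u else zA
      with hccdef
    have hccmem : ∀ v : V3, x v ≠ zA → cc v ∈ φ '' Y := by
      intro v hv
      refine hall (cc v) ⟨v, hv, fun u hu => ?_, fun u hu => ?_⟩
      · simp only [hccdef]; rw [if_pos hu]
      · simp only [hccdef]; rw [if_neg hu]
    have hcceq : ∀ v w : V3, Reach zA r x v w → cc v = cc w := by
      intro v w hvw
      funext u
      have hiff : (x u ≠ zA ∧ Reach zA r x v u) ↔ (x u ≠ zA ∧ Reach zA r x w u) :=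
        and_congr_right fun _ =>
          ⟨fun h => (reach_symm zA r x hvw).trans h, fun h => hvw.trans h⟩
      simp only [hccdef, hiff]
    have hg3 : ∀ v : V3, x v ≠ zA → ∀ u : V3, g (cc v) u ≠ zB →
        ∃ w, (x w ≠ zA ∧ Reach zA r x v w) ∧ dinf u w ≤ (n : ℤ) := by
      intro v hv u hu
      obtain ⟨w, hwd, hwne⟩ := hn u (g (cc v)) (hg1 _ (hccmem v hv)) hu
      rw [hg2 _ (hccmem v hv)] at hwne
      have hcnd : x w ≠ zA ∧ Reach zA r x v w := by
        by_contra hcon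
        apply hwne
        simp only [hccdef]
        rw [if_neg hcon]
      exact ⟨w, hcnd, by rwa [dinf_comm]⟩
    set Near : V3 → Prop := fun u => ∃ v, x v ≠ zA ∧ dinf u v ≤ (n : ℤ) with hNdef
    set yy : V3 → B := fun u => if h : Near u then g (cc h.choose) u else zB with hyydef
    have hyy1 : ∀ u v : V3, x v ≠ zA → dinf u v ≤ (n : ℤ) → yy u = g (cc v) u := by
      intro u v hv hd
      have hN : Near u := ⟨v, hv, hd⟩
      simp only [hyydef]
      rw [dif_pos hN]
      obtain ⟨hv', hd'⟩ := hN.choose_spec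
      have hreach : Reach zA r x v hN.choose := by
        refine Relation.ReflTransGen.single ⟨hv, hv', ?_⟩
        have t1 := dinf_triangle v u hN.choose
        have c1 : dinf v u = dinf u v := dinf_comm _ _
        linarith
      rw [hcceq v hN.choose hreach]
    have hyy2 : ∀ u : V3, ¬ Near u → yy u = zB := by
      intro u hu
      simp only [hyydef]
      rw [dif_neg hu]
    have hkey : ∀ b : ℤ, 0 ≤ b → 2 * (n : ℤ) + 2 * b ≤ (r : ℤ) →
        ∀ v : V3, x v ≠ zA → ∀ p : V3, dinf p v ≤ (n : ℤ) + b →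
        ∀ q : V3, dinf q p ≤ b → yy q = g (cc v) q := by
      intro b hb0 hbr v hv p hpv q hqp
      by_cases hNq : Near q
      · obtain ⟨w, hw, hqw⟩ := hNq
        rw [hyy1 q w hw hqw]
        have hreach : Reach zA r x v w := by
          refine Relation.ReflTransGen.single ⟨hv, hw, ?_⟩
          have t1 := dinf_triangle v p w
          have t2 := dinf_triangle p q w
          have c1 : dinf v p = dinf p v := dinf_comm _ _
          have c2 : dinf p q = dinf q p := dinf_comm _ _
          linarith
        rw [hcceq v w hreach]
      · rw [hyy2 q hNq]
        by_contra hne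
        have hne' : g (cc v) q ≠ zB := fun h => hne h.symm
        obtain ⟨w, ⟨hw1, _⟩, hqw⟩ := hg3 v hv q hne'
        exact hNq ⟨w, hw1, hqw⟩
    have hyyY : yy ∈ Y := by
      refine hmem' yy fun v => ?_
      by_cases hcase : ∃ u : V3, dinf u v ≤ (m : ℤ) ∧ Near u
      · obtain ⟨u₀, hu₀, w, hw, hu₀w⟩ := hcase
        refine ⟨g (cc w), hg1 _ (hccmem w hw), fun u hu => ?_⟩
        refine hkey (m : ℤ) hm0 (by linarith) w hw v ?_ u hu
        have t1 := dinf_triangle v u₀ w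
        have c1 : dinf v u₀ = dinf u₀ v := dinf_comm _ _
        linarith
      · refine ⟨fun _ => zB, hzY, fun u hu => ?_⟩
        exact hyy2 u fun hN => hcase ⟨u, hu, hN⟩
    refine ⟨yy, hyyY, ?_⟩
    funext p
    by_cases hp : ∃ v, x v ≠ zA ∧ dinf p v ≤ (n : ℤ) + (R : ℤ)
    · obtain ⟨v, hv, hpv⟩ := hp
      have h1 : φ yy p = φ (g (cc v)) p :=
        hR p yy hyyY _ (hg1 _ (hccmem v hv))
          (fun q hq => hkey (R : ℤ) hR0 (by linarith) v hv p hpv q hq)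
      rw [h1, hg2 _ (hccmem v hv)]
      by_cases hxp : x p = zA
      · simp only [hccdef]
        rw [if_neg fun h => h.1 hxp, hxp]
      · have hreach : Reach zA r x v p := by
          refine Relation.ReflTransGen.single ⟨hv, hxp, ?_⟩
          have c1 : dinf v p = dinf p v := dinf_comm _ _
          linarith
        simp only [hccdef]
        rw [if_pos ⟨hxp, hreach⟩]
    · have h1 : φ yy p = φ (fun _ => zB) p := by
        refine hR p yy hyyY _ hzY fun q hq => ?_
        refine hyy2 q ?_
        rintro ⟨v, hv, hqv⟩
        refine hp ⟨v, hv, ?_⟩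
        have t1 := dinf_triangle p q v
        have c1 : dinf p q = dinf q p := dinf_comm _ _
        linarith
      rw [h1, hzero]
      by_contra hne
      have hxp : x p ≠ zA := fun h => hne h.symm
      exact hp ⟨p, hxp, by rw [dinf_self]; positivity⟩
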